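/- Mrs. Gerber's-Lemma-based optimality for the BSC: with Y ~ Bernoulli(1/2), X = Y ⊕ Z, Z ~ Bernoulli(α) independent of Y (0 < α < 1/2), the IB curve satisfies I_Y(I_X) = log 2 - h(α * h⁻¹(log 2 - I_X)) for I_X ∈ [0, log 2]: that is, for every Markov chain X̂—X—Y with I(X̂;X) ≤ I_X one has I(X̂;Y) ≤ log 2 - h(α * h⁻¹(log 2 - I_X)), and equality is attained by X̂ = X ⊕ V with V ~ Bernoulli(δ), δ = h⁻¹(log 2 - I_X). -/

import Mathlib

open scoped BigOperators
open Real

noncomputable section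

namespace IB

variable {X Y Xh : Type} [Fintype X] [Fintype Y] [Fintype Xh]

/-- Marginal `p(x̂) = ∑ₓ p(x̂|x) p(x)`. -/
def margXh (pX : X → ℝ) (q : X → Xh → ℝ) (xh : Xh) : ℝ :=
  ∑ x, q x xh * pX x

/-- Label marginal `p_Y(y) = ∑ₓ p(y|x) p(x)`. -/
def pYm (pX : X → ℝ) (pYgX : X → Y → ℝ) (y : Y) : ℝ :=
  ∑ x, pYgX x y * pX x

/-- Joint distribution of `(Y, X̂)`. -/
def jointYXh (pX : X → ℝ) (pYgX : X → Y → ℝ) (q : X → Xh → ℝ) (y : Y) (xh : Xh) : ℝ :=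
  ∑ x, pYgX x y * q x xh * pX x

/-- Mutual information `I(X; X̂)` of the encoder. -/
def IX (pX : X → ℝ) (q : X → Xh → ℝ) : ℝ :=
  ∑ x, ∑ xh, pX x * q x xh * Real.log (q x xh / margXh pX q xh)

/-- Mutual information `I(Y; X̂)` of the induced Markov chain `Y — X — X̂`. -/
def IY (pX : X → ℝ) (pYgX : X → Y → ℝ) (q : X → Xh → ℝ) : ℝ :=
  ∑ y, ∑ xh, jointYXh pX pYgX q y xh *
    Real.log (jointYXh pX pYgX q y xh / (pYm pX pYgX y * margXh pX q xh))

/-- `q` is a conditional probability distribution (an encoder). -/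
def IsEncoder (q : X → Xh → ℝ) : Prop :=
  (∀ x xh, 0 ≤ q x xh) ∧ ∀ x, ∑ xh, q x xh = 1

/-- Decoder `p(y|x̂) = ∑ₓ p(y|x) p(x|x̂)`. -/
def dec (pX : X → ℝ) (pYgX : X → Y → ℝ) (q : X → Xh → ℝ) (y : Y) (xh : Xh) : ℝ :=
  (∑ x, pYgX x y * q x xh * pX x) / margXh pX q xh

/-- KL divergence `D_KL[p(y|x) ‖ p(y|x̂)]`. -/
def dkl (pX : X → ℝ) (pYgX : X → Y → ℝ) (q : X → Xh → ℝ) (x : X) (xh : Xh) : ℝ :=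
  ∑ y, pYgX x y * Real.log (pYgX x y / dec pX pYgX q y xh)

/-- IB partition function `Z(x, β)`. -/
def Zf (pX : X → ℝ) (pYgX : X → Y → ℝ) (q : X → Xh → ℝ) (β : ℝ) (x : X) : ℝ :=
  ∑ xh, margXh pX q xh * Real.exp (-β * dkl pX pYgX q x xh)

/-- `q` satisfies the IB fixed-point equations at `β`. -/
def IBRoot (pX : X → ℝ) (pYgX : X → Y → ℝ) (β : ℝ) (q : X → Xh → ℝ) : Prop :=
  ∀ x xh, q x xh = margXh pX q xh / Zf pX pYgX q β x * Real.exp (-β * dkl pX pYgX q x xh)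

/-- Binary symmetric channel with crossover probability `α`: `p(y|x)`. -/
def bscChannel (α : ℝ) : Bool → Bool → ℝ := fun x y => if y = x then 1 - α else α

/-- Binary symmetric encoder with flip probability `δ`: `p(x̂|x)`. -/
def bscEnc (δ : ℝ) : Bool → Bool → ℝ := fun x xh => if xh = x then 1 - δ else δ

/-- Binary entropy `h(p)` (natural log), with `h(0) = h(1) = 0`. -/
def binEnt (p : ℝ) : ℝ := -(p * Real.log p) - (1 - p) * Real.log (1 - p)

/-- Binary convolution `a * b := a(1-b) + b(1-a)`. -/
def bconv (a b : ℝ) : ℝ := a * (1 - b) + b * (1 - a)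


def dH (p : ℝ) : ℝ := Real.log (1 - p) - Real.log p

lemma dH_pos {p : ℝ} (h0 : 0 < p) (h2 : p < 1/2) : 0 < dH p :=
  sub_pos.2 (Real.log_lt_log h0 (by linarith))

def psi (t : ℝ) : ℝ := t * ((1 - t) * Real.log (1 - t)) - (1 - t) * (t * Real.log t)

lemma psi_continuous : Continuous psi := by
  have h1 : Continuous fun t : ℝ => (1 - t) * Real.log (1 - t) :=
    Real.continuous_mul_log.comp (continuous_const.sub continuous_id)
  exact (continuous_id.mul h1).sub
    ((continuous_const.sub continuous_id).mul Real.continuous_mul_log)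

lemma one_sub_mul_log_hasDeriv {t : ℝ} (h1 : t < 1) :
    HasDerivAt (fun t : ℝ => (1 - t) * Real.log (1 - t)) (-(Real.log (1 - t) + 1)) t := by
  have := (Real.hasDerivAt_mul_log (x := 1 - t) (by linarith)).comp t
    (((hasDerivAt_id t).const_sub 1))
  simpa [Function.comp_def] using this

lemma psi_hasDeriv {t : ℝ} (h0 : 0 < t) (h1 : t < 1) :
    HasDerivAt psi ((1 - 2*t) * dH t - 1) t := by
  have hA : HasDerivAt (fun t : ℝ => t * Real.log t) (Real.log t + 1) t :=
    Real.hasDerivAt_mul_log h0.ne'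
  have hB := one_sub_mul_log_hasDeriv h1
  have h := ((hasDerivAt_id t).mul hB).sub
    (((hasDerivAt_id t).const_sub 1).mul hA)
  simp only [id_eq] at h
  exact h.congr_deriv (by unfold dH; ring)

def psid (t : ℝ) : ℝ := (1 - 2*t) * dH t - 1

lemma psid_hasDeriv {t : ℝ} (h0 : 0 < t) (h1 : t < 1) :
    HasDerivAt psid (-2 * dH t + (1 - 2*t) * (-(1/(1-t)) - 1/t)) t := by
  have hl1 : HasDerivAt (fun t : ℝ => Real.log (1 - t)) (-(1/(1-t))) t := by
    have := (Real.hasDerivAt_log (x := 1 - t) (by linarith)).comp t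
      ((hasDerivAt_id t).const_sub 1)
    simpa [div_eq_mul_inv, Function.comp_def] using this
  have hl2 : HasDerivAt (fun t : ℝ => Real.log t) (1/t) t := by
    simpa [one_div] using Real.hasDerivAt_log h0.ne'
  have hdH : HasDerivAt dH (-(1/(1-t)) - 1/t) t := hl1.sub hl2
  have h := ((((hasDerivAt_id t).const_mul (2:ℝ)).const_sub 1).mul hdH).sub_const 1
  simp only [id_eq] at h
  have h2 : HasDerivAt psid (-2 * dH t + (1 - 2*t) * (-(1/(1-t)) - 1/t)) t := by
    have : -(2*1 : ℝ) * dH t = -2 * dH t := by ring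
    rw [this] at h
    exact h
  exact h2

lemma psi_concave_aux {a : ℝ} (ha : 0 < a) (ha2 : a ≤ 1/2) :
    ConcaveOn ℝ (Set.Icc a (1/2)) psi := by
  have hint : interior (Set.Icc a (1/2)) = Set.Ioo a (1/2) := interior_Icc
  apply concaveOn_of_hasDerivWithinAt2_nonpos (f' := psid)
    (f'' := fun t => -2 * dH t + (1 - 2*t) * (-(1/(1-t)) - 1/t))
    (convex_Icc _ _) psi_continuous.continuousOn
  · intro x hx
    rw [hint] at hx
    exact ((psi_hasDeriv (lt_trans ha hx.1) (by linarith [hx.2])).hasDerivWithinAt)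
  · intro x hx
    rw [hint] at hx
    exact ((psid_hasDeriv (lt_trans ha hx.1) (by linarith [hx.2])).hasDerivWithinAt)
  · intro x hx
    rw [hint] at hx
    obtain ⟨hx1, hx2⟩ := hx
    have hx0 : 0 < x := lt_trans ha hx1
    have hdh : 0 < dH x := dH_pos hx0 hx2
    have h1 : 0 < 1 - x := by linarith
    have : -(1/(1-x)) - 1/x < 0 := by
      have : 0 < 1/(1-x) := by positivity
      have : 0 < 1/x := by positivity
      linarith [one_div_pos.2 h1]
    nlinarith [this, hdh]

lemma psi_half : psi (1/2) = 0 := by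
  unfold psi; norm_num

lemma psi_key {α t : ℝ} (hα0 : 0 < α) (hα2 : α < 1/2) (ht0 : 0 < t) (ht2 : t < 1/2) :
    (1 - 2*α) * psi t ≤ psi (α + (1 - 2*α)*t) := by
  have hconc := psi_concave_aux ht0 ht2.le
  have h1 : t ∈ Set.Icc t (1/2) := ⟨le_refl _, ht2.le⟩
  have h2 : (1/2 : ℝ) ∈ Set.Icc t (1/2) := ⟨ht2.le, le_refl _⟩
  have hab : (1 - 2*α) + (2*α) = 1 := by ring
  have := hconc.2 h1 h2 (by linarith) (by linarith) hab
  rw [psi_half] at this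
  have heq : (1 - 2*α) • t + (2*α) • (1/2 : ℝ) = α + (1 - 2*α)*t := by
    simp [smul_eq_mul]; ring
  rw [heq] at this
  simpa using this


lemma psi_eq (t : ℝ) : psi t = t * (1 - t) * dH t := by
  unfold psi dH; ring

lemma bconv_mem {α t : ℝ} (hα0 : 0 < α) (hα2 : α < 1/2) (ht0 : 0 ≤ t) (ht2 : t < 1/2) :
    0 < α + (1 - 2*α)*t ∧ α + (1 - 2*α)*t < 1/2 := by
  constructor
  · nlinarith
  · nlinarith

def rho (α : ℝ) (t : ℝ) : ℝ := Real.log (dH (α + (1 - 2*α)*t)) - Real.log (dH t)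

lemma dH_hasDeriv {p : ℝ} (h0 : 0 < p) (h1 : p < 1) :
    HasDerivAt dH (-(1/(1-p)) - 1/p) p := by
  have hl1 : HasDerivAt (fun t : ℝ => Real.log (1 - t)) (-(1/(1-p))) p := by
    have := (Real.hasDerivAt_log (x := 1 - p) (by linarith)).comp p
      ((hasDerivAt_id p).const_sub 1)
    simpa [div_eq_mul_inv, Function.comp_def] using this
  have hl2 : HasDerivAt (fun t : ℝ => Real.log t) (1/p) p := by
    simpa [one_div] using Real.hasDerivAt_log h0.ne'
  exact hl1.sub hl2

lemma rho_hasDeriv {α t : ℝ} (hα0 : 0 < α) (hα2 : α < 1/2) (ht0 : 0 < t) (ht2 : t < 1/2) :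
    HasDerivAt (rho α)
      ((1 - 2*α) * (-(1/(1-(α + (1 - 2*α)*t))) - 1/(α + (1 - 2*α)*t)) / dH (α + (1 - 2*α)*t)
        - (-(1/(1-t)) - 1/t) / dH t) t := by
  set u := α + (1 - 2*α)*t with hu
  obtain ⟨hu0, hu2⟩ := bconv_mem hα0 hα2 ht0.le ht2
  have hdHu : 0 < dH u := dH_pos hu0 hu2
  have hdHt : 0 < dH t := dH_pos ht0 ht2
  have hg : HasDerivAt (fun t : ℝ => α + (1 - 2*α)*t) (1 - 2*α) t := by
    simpa using ((hasDerivAt_id t).const_mul (1 - 2*α)).const_add α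
  have hdu : HasDerivAt (fun s : ℝ => dH (α + (1 - 2*α)*s))
      ((-(1/(1-u)) - 1/u) * (1 - 2*α)) t :=
    by have := (dH_hasDeriv hu0 (by linarith)).comp t hg; exact this
  have hlogu : HasDerivAt (fun s : ℝ => Real.log (dH (α + (1 - 2*α)*s)))
      ((dH u)⁻¹ * ((-(1/(1-u)) - 1/u) * (1 - 2*α))) t :=
    by have := (Real.hasDerivAt_log hdHu.ne').comp t hdu; exact this
  have hlogt : HasDerivAt (fun s : ℝ => Real.log (dH s))
      ((dH t)⁻¹ * (-(1/(1-t)) - 1/t)) t :=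
    (Real.hasDerivAt_log hdHt.ne').comp t (dH_hasDeriv ht0 (by linarith))
  have h := hlogu.sub hlogt
  have h2 : (dH u)⁻¹ * ((-(1/(1-u)) - 1/u) * (1 - 2*α)) - (dH t)⁻¹ * (-(1/(1-t)) - 1/t)
      = (1 - 2*α) * (-(1/(1-u)) - 1/u) / dH u - (-(1/(1-t)) - 1/t) / dH t := by
    field_simp
  rw [h2] at h
  exact h


lemma expr_eq (c A B u t : ℝ) (ht : t ≠ 0) (h1t : 1 - t ≠ 0) (hu : u ≠ 0)
    (h1u : 1 - u ≠ 0) (hA : A ≠ 0) (hB : B ≠ 0) :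
    c * (-(1/(1-u)) - 1/u) / B - (-(1/(1-t)) - 1/t) / A
      = 1/(t*(1-t)*A) - c/(u*(1-u)*B) := by
  field_simp
  ring

lemma rho_deriv_nonneg {α t : ℝ} (hα0 : 0 < α) (hα2 : α < 1/2) (ht0 : 0 < t) (ht2 : t < 1/2) :
    0 ≤ (1 - 2*α) * (-(1/(1-(α + (1 - 2*α)*t))) - 1/(α + (1 - 2*α)*t)) / dH (α + (1 - 2*α)*t)
        - (-(1/(1-t)) - 1/t) / dH t := by
  obtain ⟨hu0, hu2⟩ := bconv_mem hα0 hα2 ht0.le ht2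
  have hdHu : 0 < dH (α + (1 - 2*α)*t) := dH_pos hu0 hu2
  have hdHt : 0 < dH t := dH_pos ht0 ht2
  have hpt : 0 < psi t := by
    rw [psi_eq]; exact mul_pos (mul_pos ht0 (by linarith)) hdHt
  have hpu : 0 < psi (α + (1 - 2*α)*t) := by
    rw [psi_eq]; exact mul_pos (mul_pos hu0 (by linarith)) hdHu
  have hkey := psi_key hα0 hα2 ht0 ht2
  have hdiv : (1 - 2*α)/psi (α + (1 - 2*α)*t) ≤ 1/psi t := by
    rw [div_le_div_iff₀ hpu hpt]
    linarith
  rw [expr_eq (1 - 2*α) (dH t) (dH (α + (1 - 2*α)*t)) (α + (1 - 2*α)*t) t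
    ht0.ne' (by linarith) hu0.ne' (by linarith) hdHt.ne' hdHu.ne']
  rw [← psi_eq, ← psi_eq]
  linarith

lemma rho_mono {α t1 t2 : ℝ} (hα0 : 0 < α) (hα2 : α < 1/2)
    (h1 : 0 < t1) (h12 : t1 ≤ t2) (h2 : t2 < 1/2) :
    rho α t1 ≤ rho α t2 := by
  have hmono : MonotoneOn (rho α) (Set.Icc t1 t2) := by
    apply monotoneOn_of_deriv_nonneg (convex_Icc t1 t2)
    · intro x hx
      exact (rho_hasDeriv hα0 hα2 (lt_of_lt_of_le h1 hx.1)
        (lt_of_le_of_lt hx.2 h2)).continuousAt.continuousWithinAt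
    · intro x hx
      rw [interior_Icc] at hx
      exact (rho_hasDeriv hα0 hα2 (lt_trans h1 hx.1)
        (lt_trans hx.2 h2)).differentiableAt.differentiableWithinAt
    · intro x hx
      rw [interior_Icc] at hx
      have hx0 : 0 < x := lt_trans h1 hx.1
      have hx2 : x < 1/2 := lt_trans hx.2 h2
      rw [(rho_hasDeriv hα0 hα2 hx0 hx2).deriv]
      exact rho_deriv_nonneg hα0 hα2 hx0 hx2
  exact hmono ⟨le_refl _, h12⟩ ⟨h12, le_refl _⟩ h12

lemma dH_cross {α t1 t2 : ℝ} (hα0 : 0 < α) (hα2 : α < 1/2)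
    (h1 : 0 < t1) (h12 : t1 ≤ t2) (h2 : t2 < 1/2) :
    dH (α + (1 - 2*α)*t1) * dH t2 ≤ dH (α + (1 - 2*α)*t2) * dH t1 := by
  obtain ⟨hu10, hu12⟩ := bconv_mem hα0 hα2 h1.le (lt_of_le_of_lt h12 h2)
  obtain ⟨hu20, hu22⟩ := bconv_mem hα0 hα2 (le_trans h1.le h12) h2
  have hd1 : 0 < dH t1 := dH_pos h1 (lt_of_le_of_lt h12 h2)
  have hd2 : 0 < dH t2 := dH_pos (lt_of_lt_of_le h1 h12) h2
  have hdu1 : 0 < dH (α + (1 - 2*α)*t1) := dH_pos hu10 hu12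
  have hdu2 : 0 < dH (α + (1 - 2*α)*t2) := dH_pos hu20 hu22
  have hr := rho_mono hα0 hα2 h1 h12 h2
  unfold rho at hr
  have hlog : Real.log (dH (α + (1 - 2*α)*t1) * dH t2)
      ≤ Real.log (dH (α + (1 - 2*α)*t2) * dH t1) := by
    rw [Real.log_mul hdu1.ne' hd2.ne', Real.log_mul hdu2.ne' hd1.ne']
    linarith
  exact (Real.log_le_log_iff (mul_pos hdu1 hd2) (mul_pos hdu2 hd1)).1 hlog


lemma binEntropy_ge_of_mem {a u : ℝ} (ha0 : 0 ≤ a) (hau : a ≤ u) (hu : u ≤ 1 - a) :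
    Real.binEntropy a ≤ Real.binEntropy u := by
  rcases le_or_gt u 2⁻¹ with h | h
  · exact Real.binEntropy_strictMonoOn.monotoneOn ⟨ha0, by linarith⟩ ⟨by linarith, h⟩ hau
  · rw [← Real.binEntropy_one_sub u]
    exact Real.binEntropy_strictMonoOn.monotoneOn ⟨ha0, by linarith⟩
      ⟨by linarith, by linarith⟩ (by linarith)

lemma G_hasDeriv {α c t : ℝ} (hα0 : 0 < α) (hα2 : α < 1/2) (ht0 : 0 < t) (ht2 : t < 1/2) :
    HasDerivAt (fun s => Real.binEntropy (α + (1 - 2*α)*s) - c * Real.binEntropy s)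
      ((1 - 2*α) * dH (α + (1 - 2*α)*t) - c * dH t) t := by
  obtain ⟨hu0, hu2⟩ := bconv_mem hα0 hα2 ht0.le ht2
  have hg : HasDerivAt (fun s : ℝ => α + (1 - 2*α)*s) (1 - 2*α) t := by
    simpa using ((hasDerivAt_id t).const_mul (1 - 2*α)).const_add α
  have h1 : HasDerivAt (fun s : ℝ => Real.binEntropy (α + (1 - 2*α)*s))
      (dH (α + (1 - 2*α)*t) * (1 - 2*α)) t := by
    have hb := Real.hasDerivAt_binEntropy (p := α + (1 - 2*α)*t) hu0.ne' (by
      intro h; rw [h] at hu2; norm_num at hu2)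
    exact (hb.comp t hg)
  have h2 : HasDerivAt (fun s : ℝ => c * Real.binEntropy s) (c * dH t) t := by
    have hb := Real.hasDerivAt_binEntropy (p := t) ht0.ne' (by
      intro h; rw [h] at ht2; norm_num at ht2)
    exact hb.const_mul c
  have h := h1.sub h2
  exact h.congr_deriv (by ring)

lemma G_min {α δ : ℝ} (hα0 : 0 < α) (hα2 : α < 1/2) (hδ0 : 0 < δ) (hδ2 : δ < 1/2) :
    ∀ t, 0 ≤ t → t ≤ 1 →
      Real.binEntropy (α + (1 - 2*α)*δ) - ((1 - 2*α) * dH (α + (1 - 2*α)*δ) / dH δ)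
          * Real.binEntropy δ
        ≤ Real.binEntropy (α + (1 - 2*α)*t) - ((1 - 2*α) * dH (α + (1 - 2*α)*δ) / dH δ)
          * Real.binEntropy t := by
  set c := (1 - 2*α) * dH (α + (1 - 2*α)*δ) / dH δ with hc
  set G := fun s => Real.binEntropy (α + (1 - 2*α)*s) - c * Real.binEntropy s with hG
  have hdHδ : 0 < dH δ := dH_pos hδ0 hδ2
  have hGcont : Continuous G := by
    apply Continuous.sub
    · exact Real.binEntropy_continuous.comp (by continuity)
    · exact continuous_const.mul Real.binEntropy_continuous
  have hanti : AntitoneOn G (Set.Icc 0 δ) := by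
    apply antitoneOn_of_deriv_nonpos (convex_Icc 0 δ) hGcont.continuousOn
    · rw [interior_Icc]
      exact fun x hx => (G_hasDeriv hα0 hα2 hx.1
        (lt_trans hx.2 hδ2)).differentiableAt.differentiableWithinAt
    · intro x hx
      rw [interior_Icc] at hx
      have hx0 : 0 < x := hx.1
      have hx2 : x < 1/2 := lt_trans hx.2 hδ2
      rw [(G_hasDeriv hα0 hα2 hx0 hx2).deriv]
      have hcross := dH_cross hα0 hα2 hx0 hx.2.le hδ2
      rw [hc, div_mul_eq_mul_div, sub_nonpos, le_div_iff₀ hdHδ]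
      nlinarith [dH_pos hx0 hx2]
  have hmono : MonotoneOn G (Set.Icc δ (1/2)) := by
    apply monotoneOn_of_deriv_nonneg (convex_Icc δ (1/2)) hGcont.continuousOn
    · rw [interior_Icc]
      exact fun x hx => (G_hasDeriv hα0 hα2 (lt_trans hδ0 hx.1)
        hx.2).differentiableAt.differentiableWithinAt
    · intro x hx
      rw [interior_Icc] at hx
      have hx0 : 0 < x := lt_trans hδ0 hx.1
      have hx2 : x < 1/2 := hx.2
      rw [(G_hasDeriv hα0 hα2 hx0 hx2).deriv]
      have hcross := dH_cross hα0 hα2 hδ0 hx.1.le hx2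
      rw [hc, div_mul_eq_mul_div, sub_nonneg, div_le_iff₀ hdHδ]
      nlinarith [dH_pos hx0 hx2]
  have hhalf : ∀ t, 0 ≤ t → t ≤ 1/2 → G δ ≤ G t := by
    intro t ht0 ht2
    rcases le_or_gt t δ with h | h
    · exact hanti ⟨ht0, h⟩ ⟨hδ0.le, le_refl _⟩ h
    · exact hmono ⟨le_refl _, hδ2.le⟩ ⟨h.le, ht2⟩ h.le
  intro t ht0 ht1
  show G δ ≤ G t
  rcases le_or_gt t (1/2) with h | h
  · exact hhalf t ht0 h
  · have hsym : G t = G (1 - t) := by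
      rw [hG]
      simp only
      rw [← Real.binEntropy_one_sub t]
      have : α + (1 - 2*α)*(1 - (1-t)) = 1 - (α + (1 - 2*α)*(1-t)) := by ring
      rw [show α + (1 - 2*α)*t = 1 - (α + (1 - 2*α)*(1-t)) by ring,
        Real.binEntropy_one_sub]
    rw [hsym]
    exact hhalf (1 - t) (by linarith) (by linarith)


lemma supline {α δ : ℝ} (hα0 : 0 < α) (hα2 : α < 1/2) (hδ0 : 0 ≤ δ) (hδ2 : δ < 1/2) :
    ∃ c, 0 ≤ c ∧ ∀ t, 0 ≤ t → t ≤ 1 →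
      Real.binEntropy (α + (1 - 2*α)*δ) + c * (Real.binEntropy t - Real.binEntropy δ)
        ≤ Real.binEntropy (α + (1 - 2*α)*t) := by
  rcases eq_or_lt_of_le hδ0 with h | h
  · refine ⟨0, le_refl _, fun t ht0 ht1 => ?_⟩
    rw [← h]
    simp only [mul_zero, add_zero, zero_mul]
    exact binEntropy_ge_of_mem hα0.le (by nlinarith) (by nlinarith)
  · refine ⟨(1 - 2*α) * dH (α + (1 - 2*α)*δ) / dH δ, ?_, fun t ht0 ht1 => ?_⟩
    · obtain ⟨hu0, hu2⟩ := bconv_mem hα0 hα2 hδ0 hδ2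
      exact div_nonneg (mul_nonneg (by linarith) (dH_pos hu0 hu2).le) (dH_pos h hδ2).le
    · have := G_min hα0 hα2 h hδ2 t ht0 ht1
      linarith

lemma ent_id {s : ℝ} (h0 : 0 ≤ s) (h1 : s ≤ 1) :
    s * Real.log (2*s) + (1-s) * Real.log (2*(1-s)) = Real.log 2 - Real.binEntropy s := by
  rcases eq_or_lt_of_le h0 with h | h
  · rw [← h]; simp
  rcases eq_or_lt_of_le h1 with h' | h'
  · rw [h']; simp
  rw [Real.log_mul two_ne_zero h.ne', Real.log_mul two_ne_zero (by linarith : (1:ℝ) - s ≠ 0)]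
  unfold Real.binEntropy
  rw [Real.log_inv, Real.log_inv]
  ring


lemma perxh_IX {a b w : ℝ} (ha : 0 ≤ a) (hb : 0 ≤ b) (hw : w = a*(1/2) + b*(1/2)) :
    1/2 * a * Real.log (a / w) + 1/2 * b * Real.log (b / w)
      = w * Real.log 2 - w * Real.binEntropy (a/(2*w)) := by
  rcases eq_or_lt_of_le (by linarith : (0:ℝ) ≤ w) with h0 | h0
  · have ha0 : a = 0 := by linarith
    have hb0 : b = 0 := by linarith
    simp [ha0, hb0, ← h0]
  · set s := a/(2*w) with hs
    have hs0 : 0 ≤ s := by positivity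
    have hs1 : s ≤ 1 := by rw [hs, div_le_one (by linarith)]; linarith
    have ha2 : a = 2*w*s := by rw [hs]; field_simp
    have hb2 : b = 2*w*(1 - s) := by rw [hs]; field_simp; linarith
    have hha : a / w = 2*s := by rw [ha2]; field_simp
    have hhb : b / w = 2*(1 - s) := by rw [hb2]; field_simp
    rw [hha, hhb, ha2, hb2]
    linear_combination w * ent_id hs0 hs1

lemma perxh_IY {α a b w jT jF : ℝ} (hα0 : 0 < α) (hα1 : α < 1) (hα2 : α ≤ 1/2)
    (ha : 0 ≤ a) (hb : 0 ≤ b) (hw : w = a*(1/2) + b*(1/2))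
    (hjT : jT = (1-α)*a*(1/2) + α*(b*(1/2)))
    (hjF : jF = α*(a*(1/2)) + (1-α)*(b*(1/2))) :
    jT * Real.log (jT / (1/2*w)) + jF * Real.log (jF / (1/2*w))
      = w * Real.log 2 - w * Real.binEntropy (α + (1-2*α)*(a/(2*w))) := by
  rcases eq_or_lt_of_le (by linarith : (0:ℝ) ≤ w) with h0 | h0
  · have ha0 : a = 0 := by linarith
    have hb0 : b = 0 := by linarith
    simp [ha0, hb0, ← h0, hjT, hjF]
  · set s := a/(2*w) with hs
    have hs0 : 0 ≤ s := by positivity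
    have hs1 : s ≤ 1 := by rw [hs, div_le_one (by linarith)]; linarith
    have ha2 : a = 2*w*s := by rw [hs]; field_simp
    have hb2 : b = 2*w*(1 - s) := by rw [hs]; field_simp; linarith
    set u := α + (1-2*α)*s with hu
    have hnn : 0 ≤ (1-2*α)*s := mul_nonneg (by linarith) hs0
    have hle : (1-2*α)*s ≤ (1-2*α) :=
      mul_le_of_le_one_right (by linarith) hs1
    have hu0 : 0 < u := by rw [hu]; linarith
    have hu1 : u < 1 := by rw [hu]; linarith
    have hjTu : jT = w*u := by rw [hjT, ha2, hb2, hu]; ring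
    have hjFu : jF = w*(1-u) := by rw [hjF, ha2, hb2, hu]; ring
    have hhT : jT / (1/2*w) = 2*u := by rw [hjTu]; field_simp
    have hhF : jF / (1/2*w) = 2*(1-u) := by rw [hjFu]; field_simp
    rw [hhT, hhF, hjTu, hjFu]
    linear_combination w * ent_id (by linarith : (0:ℝ) ≤ u) (by linarith : u ≤ 1)


section Reduction

variable {Xh' : Type} [Fintype Xh']

lemma marg_eq (q : Bool → Xh' → ℝ) (xh : Xh') :
    margXh (fun _ : Bool => (1:ℝ)/2) q xh
      = q true xh * (1/2) + q false xh * (1/2) := by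
  simp [margXh, Fintype.sum_bool]

lemma marg_nonneg (q : Bool → Xh' → ℝ) (hq : IsEncoder q) (xh : Xh') :
    0 ≤ margXh (fun _ : Bool => (1:ℝ)/2) q xh := by
  rw [marg_eq]
  have h1 := hq.1 true xh
  have h2 := hq.1 false xh
  linarith

lemma marg_sum (q : Bool → Xh' → ℝ) (hq : IsEncoder q) :
    ∑ xh, margXh (fun _ : Bool => (1:ℝ)/2) q xh = 1 := by
  unfold margXh
  rw [Finset.sum_comm]
  have : ∀ x : Bool, ∑ xh, q x xh * ((fun _ : Bool => (1:ℝ)/2) x)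
      = (1:ℝ)/2 := by
    intro x
    rw [← Finset.sum_mul, hq.2 x]
    norm_num
  rw [Finset.sum_congr rfl (fun x _ => this x), Fintype.sum_bool]
  norm_num

lemma s_nonneg (q : Bool → Xh' → ℝ) (hq : IsEncoder q) (xh : Xh') :
    0 ≤ q true xh / (2 * margXh (fun _ : Bool => (1:ℝ)/2) q xh) :=
  div_nonneg (hq.1 true xh) (by linarith [marg_nonneg q hq xh])

lemma s_le_one (q : Bool → Xh' → ℝ) (hq : IsEncoder q) (xh : Xh') :
    q true xh / (2 * margXh (fun _ : Bool => (1:ℝ)/2) q xh) ≤ 1 := by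
  rcases eq_or_lt_of_le (marg_nonneg q hq xh) with h | h
  · rw [← h]
    norm_num
  · rw [div_le_one (by linarith)]
    have := marg_eq q xh
    have := hq.1 false xh
    linarith

lemma IX_eq (q : Bool → Xh' → ℝ) (hq : IsEncoder q) :
    IX (fun _ : Bool => (1:ℝ)/2) q
      = Real.log 2 - ∑ xh, margXh (fun _ : Bool => (1:ℝ)/2) q xh *
          Real.binEntropy (q true xh / (2 * margXh (fun _ : Bool => (1:ℝ)/2) q xh)) := by
  unfold IX
  rw [Fintype.sum_bool, ← Finset.sum_add_distrib]
  have key : ∀ xh : Xh',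
      (fun _ : Bool => (1:ℝ)/2) true * q true xh *
          Real.log (q true xh / margXh (fun _ : Bool => (1:ℝ)/2) q xh)
        + (fun _ : Bool => (1:ℝ)/2) false * q false xh *
          Real.log (q false xh / margXh (fun _ : Bool => (1:ℝ)/2) q xh)
      = margXh (fun _ : Bool => (1:ℝ)/2) q xh * Real.log 2
        - margXh (fun _ : Bool => (1:ℝ)/2) q xh *
          Real.binEntropy (q true xh / (2 * margXh (fun _ : Bool => (1:ℝ)/2) q xh)) := by
    intro xh
    have := perxh_IX (hq.1 true xh) (hq.1 false xh) (marg_eq q xh)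
    simpa using this
  rw [Finset.sum_congr rfl (fun xh _ => key xh), Finset.sum_sub_distrib,
    ← Finset.sum_mul, marg_sum q hq, one_mul]

lemma pYm_eq (α : ℝ) (y : Bool) :
    pYm (fun _ : Bool => (1:ℝ)/2) (bscChannel α) y = 1/2 := by
  cases y <;> simp [pYm, bscChannel, Fintype.sum_bool] <;> ring

lemma joint_true (α : ℝ) (q : Bool → Xh' → ℝ) (xh : Xh') :
    jointYXh (fun _ : Bool => (1:ℝ)/2) (bscChannel α) q true xh
      = (1-α)*(q true xh)*(1/2) + α*(q false xh*(1/2)) := by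
  simp [jointYXh, bscChannel, Fintype.sum_bool]
  ring

lemma joint_false (α : ℝ) (q : Bool → Xh' → ℝ) (xh : Xh') :
    jointYXh (fun _ : Bool => (1:ℝ)/2) (bscChannel α) q false xh
      = α*((q true xh)*(1/2)) + (1-α)*(q false xh*(1/2)) := by
  simp [jointYXh, bscChannel, Fintype.sum_bool]
  ring

lemma IY_eq (α : ℝ) (hα0 : 0 < α) (hα1 : α < 1) (hα2 : α ≤ 1/2)
    (q : Bool → Xh' → ℝ) (hq : IsEncoder q) :
    IY (fun _ : Bool => (1:ℝ)/2) (bscChannel α) q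
      = Real.log 2 - ∑ xh, margXh (fun _ : Bool => (1:ℝ)/2) q xh *
          Real.binEntropy (α + (1-2*α) *
            (q true xh / (2 * margXh (fun _ : Bool => (1:ℝ)/2) q xh))) := by
  unfold IY
  rw [Fintype.sum_bool, ← Finset.sum_add_distrib]
  have key : ∀ xh : Xh',
      jointYXh (fun _ : Bool => (1:ℝ)/2) (bscChannel α) q true xh *
          Real.log (jointYXh (fun _ : Bool => (1:ℝ)/2) (bscChannel α) q true xh /
            (pYm (fun _ : Bool => (1:ℝ)/2) (bscChannel α) true *
              margXh (fun _ : Bool => (1:ℝ)/2) q xh))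
        + jointYXh (fun _ : Bool => (1:ℝ)/2) (bscChannel α) q false xh *
          Real.log (jointYXh (fun _ : Bool => (1:ℝ)/2) (bscChannel α) q false xh /
            (pYm (fun _ : Bool => (1:ℝ)/2) (bscChannel α) false *
              margXh (fun _ : Bool => (1:ℝ)/2) q xh))
      = margXh (fun _ : Bool => (1:ℝ)/2) q xh * Real.log 2
        - margXh (fun _ : Bool => (1:ℝ)/2) q xh *
          Real.binEntropy (α + (1-2*α) *
            (q true xh / (2 * margXh (fun _ : Bool => (1:ℝ)/2) q xh))) := by
    intro xh
    rw [pYm_eq, pYm_eq]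
    exact perxh_IY hα0 hα1 hα2 (hq.1 true xh) (hq.1 false xh) (marg_eq q xh)
      (joint_true α q xh) (joint_false α q xh)
  rw [Finset.sum_congr rfl (fun xh _ => key xh), Finset.sum_sub_distrib,
    ← Finset.sum_mul, marg_sum q hq, one_mul]

end Reduction

lemma binEnt_eq (p : ℝ) : binEnt p = Real.binEntropy p := by
  unfold binEnt Real.binEntropy
  rw [Real.log_inv, Real.log_inv]
  ring

lemma bconv_eq (a b : ℝ) : bconv a b = a + (1-2*a)*b := by
  unfold bconv; ring


lemma binEntropy_half : Real.binEntropy (1/2) = Real.log 2 := by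
  rw [show (1/2:ℝ) = 2⁻¹ by norm_num, Real.binEntropy_two_inv]

/-- Mrs. Gerber's-Lemma-based optimality for the BSC.  With
`δ = h⁻¹(log 2 - I_X)`, every Markov chain `X̂ — X — Y` with `I(X̂;X) ≤ I_X` has
`I(X̂;Y) ≤ log 2 - h(α*δ)`, and equality is attained by `X̂ = X ⊕ V`, `V ~ Bern(δ)`;
that is, the IB curve satisfies `I_Y(I_X) = log 2 - h(α * h⁻¹(log 2 - I_X))`. -/
theorem bsc_curve_mrs_gerber (α IXc δ : ℝ)
    (hα0 : 0 < α) (hα2 : α < 1 / 2)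
    (hI0 : 0 ≤ IXc) (hI1 : IXc ≤ Real.log 2)
    (hδ0 : 0 ≤ δ) (hδ2 : δ ≤ 1 / 2)
    (hδinv : binEnt δ = Real.log 2 - IXc) :
    (∀ (Xh' : Type) [Fintype Xh'], ∀ q : Bool → Xh' → ℝ, IsEncoder q →
      IX (fun _ : Bool => (1 : ℝ) / 2) q ≤ IXc →
      IY (fun _ : Bool => (1 : ℝ) / 2) (bscChannel α) q
        ≤ Real.log 2 - binEnt (bconv α δ)) ∧
    IsEncoder (bscEnc δ) ∧
    IX (fun _ : Bool => (1 : ℝ) / 2) (bscEnc δ) ≤ IXc ∧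
    IY (fun _ : Bool => (1 : ℝ) / 2) (bscChannel α) (bscEnc δ)
      = Real.log 2 - binEnt (bconv α δ) := by
  have hδE : Real.binEntropy δ = Real.log 2 - IXc := by rw [← binEnt_eq]; exact hδinv
  have henc : IsEncoder (bscEnc δ) := by
    constructor
    · intro x xh
      unfold bscEnc
      split <;> linarith
    · intro x
      rw [Fintype.sum_bool]
      cases x <;> simp [bscEnc]
  have hmhalf : ∀ xh : Bool, margXh (fun _ : Bool => (1:ℝ)/2) (bscEnc δ) xh = 1/2 := by
    intro xh
    rw [marg_eq]
    cases xh <;> simp [bscEnc] <;> ring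
  refine ⟨?_, henc, ?_, ?_⟩
  · intro Xh' _ q hq hIX
    have hIXeq := IX_eq q hq
    have hIYeq := IY_eq α hα0 (by linarith) hα2.le q hq
    rw [hIXeq] at hIX
    rw [hIYeq, binEnt_eq, bconv_eq]
    have hS : Real.binEntropy δ
        ≤ ∑ xh, margXh (fun _ : Bool => (1:ℝ)/2) q xh *
            Real.binEntropy (q true xh / (2 * margXh (fun _ : Bool => (1:ℝ)/2) q xh)) := by
      rw [hδE]; linarith
    suffices hKey : Real.binEntropy (α + (1-2*α)*δ)
        ≤ ∑ xh, margXh (fun _ : Bool => (1:ℝ)/2) q xh *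
            Real.binEntropy (α + (1-2*α) *
              (q true xh / (2 * margXh (fun _ : Bool => (1:ℝ)/2) q xh))) by linarith
    rcases lt_or_eq_of_le hδ2 with hlt | hhalf
    · obtain ⟨c, hc0, hsl⟩ := supline hα0 hα2 hδ0 hlt
      have hpt : ∀ xh ∈ Finset.univ, margXh (fun _ : Bool => (1:ℝ)/2) q xh *
          (Real.binEntropy (α + (1-2*α)*δ)
            + c * (Real.binEntropy (q true xh / (2 * margXh (fun _ : Bool => (1:ℝ)/2) q xh))
              - Real.binEntropy δ))
          ≤ margXh (fun _ : Bool => (1:ℝ)/2) q xh *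
            Real.binEntropy (α + (1-2*α) *
              (q true xh / (2 * margXh (fun _ : Bool => (1:ℝ)/2) q xh))) := by
        intro xh _
        exact mul_le_mul_of_nonneg_left
          (hsl _ (s_nonneg q hq xh) (s_le_one q hq xh)) (marg_nonneg q hq xh)
      have hsum := Finset.sum_le_sum hpt
      have hexp : ∑ xh, margXh (fun _ : Bool => (1:ℝ)/2) q xh *
          (Real.binEntropy (α + (1-2*α)*δ)
            + c * (Real.binEntropy (q true xh / (2 * margXh (fun _ : Bool => (1:ℝ)/2) q xh))
              - Real.binEntropy δ))
          = Real.binEntropy (α + (1-2*α)*δ)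
            + c * ((∑ xh, margXh (fun _ : Bool => (1:ℝ)/2) q xh *
                Real.binEntropy (q true xh / (2 * margXh (fun _ : Bool => (1:ℝ)/2) q xh)))
              - Real.binEntropy δ) := by
        have h1 : ∀ xh : Xh', margXh (fun _ : Bool => (1:ℝ)/2) q xh *
            (Real.binEntropy (α + (1-2*α)*δ)
              + c * (Real.binEntropy (q true xh / (2 * margXh (fun _ : Bool => (1:ℝ)/2) q xh))
                - Real.binEntropy δ))
            = (Real.binEntropy (α + (1-2*α)*δ) - c * Real.binEntropy δ) *
                margXh (fun _ : Bool => (1:ℝ)/2) q xh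
              + c * (margXh (fun _ : Bool => (1:ℝ)/2) q xh *
                Real.binEntropy (q true xh / (2 * margXh (fun _ : Bool => (1:ℝ)/2) q xh))) := by
          intro xh; ring
        rw [Finset.sum_congr rfl (fun xh _ => h1 xh), Finset.sum_add_distrib,
          ← Finset.mul_sum, ← Finset.mul_sum, marg_sum q hq]
        ring
      rw [hexp] at hsum
      nlinarith [mul_nonneg hc0 (by linarith : (0:ℝ) ≤
        (∑ xh, margXh (fun _ : Bool => (1:ℝ)/2) q xh *
          Real.binEntropy (q true xh / (2 * margXh (fun _ : Bool => (1:ℝ)/2) q xh)))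
          - Real.binEntropy δ)]
    · subst hhalf
      rw [show α + (1-2*α)*((1:ℝ)/2) = 1/2 by ring, binEntropy_half]
      rw [binEntropy_half] at hS
      have hterm_nonneg : ∀ xh ∈ Finset.univ, (0:ℝ) ≤
          margXh (fun _ : Bool => (1:ℝ)/2) q xh *
            (Real.log 2 - Real.binEntropy (q true xh /
              (2 * margXh (fun _ : Bool => (1:ℝ)/2) q xh))) := by
        intro xh _
        exact mul_nonneg (marg_nonneg q hq xh)
          (sub_nonneg.2 Real.binEntropy_le_log_two)
      have hsplit : ∑ xh, margXh (fun _ : Bool => (1:ℝ)/2) q xh *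
          (Real.log 2 - Real.binEntropy (q true xh /
            (2 * margXh (fun _ : Bool => (1:ℝ)/2) q xh)))
          = Real.log 2 - ∑ xh, margXh (fun _ : Bool => (1:ℝ)/2) q xh *
              Real.binEntropy (q true xh / (2 * margXh (fun _ : Bool => (1:ℝ)/2) q xh)) := by
        simp only [mul_sub]
        rw [Finset.sum_sub_distrib, ← Finset.sum_mul, marg_sum q hq, one_mul]
      have hzero : ∑ xh, margXh (fun _ : Bool => (1:ℝ)/2) q xh *
          (Real.log 2 - Real.binEntropy (q true xh /
            (2 * margXh (fun _ : Bool => (1:ℝ)/2) q xh))) = 0 := by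
        refine le_antisymm ?_ (Finset.sum_nonneg hterm_nonneg)
        rw [hsplit]
        linarith
      have hterm := (Finset.sum_eq_zero_iff_of_nonneg hterm_nonneg).1 hzero
      have hbu : ∀ xh : Xh', margXh (fun _ : Bool => (1:ℝ)/2) q xh *
          Real.binEntropy (α + (1-2*α) *
            (q true xh / (2 * margXh (fun _ : Bool => (1:ℝ)/2) q xh)))
          = margXh (fun _ : Bool => (1:ℝ)/2) q xh * Real.log 2 := by
        intro xh
        rcases eq_or_lt_of_le (marg_nonneg q hq xh) with h | h
        · rw [← h, zero_mul, zero_mul]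
        · have h0 := hterm xh (Finset.mem_univ xh)
          have h1 : Real.log 2 - Real.binEntropy (q true xh /
              (2 * margXh (fun _ : Bool => (1:ℝ)/2) q xh)) = 0 := by
            rcases mul_eq_zero.1 h0 with h' | h'
            · exact absurd h' (ne_of_gt h)
            · exact h'
          have h2 : q true xh / (2 * margXh (fun _ : Bool => (1:ℝ)/2) q xh) = 2⁻¹ :=
            Real.binEntropy_eq_log_two.1 (by linarith)
          rw [h2, show α + (1-2*α)*(2⁻¹:ℝ) = 2⁻¹ by ring, Real.binEntropy_two_inv]
      rw [Finset.sum_congr rfl (fun xh _ => hbu xh), ← Finset.sum_mul, marg_sum q hq, one_mul]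
  · have hIXv : IX (fun _ : Bool => (1:ℝ)/2) (bscEnc δ) = Real.log 2 - Real.binEntropy δ := by
      rw [IX_eq (bscEnc δ) henc, Fintype.sum_bool, hmhalf true, hmhalf false]
      simp only [bscEnc]
      norm_num
      ring
    rw [hIXv, hδE]
    linarith
  · have hIYv : IY (fun _ : Bool => (1:ℝ)/2) (bscChannel α) (bscEnc δ)
        = Real.log 2 - Real.binEntropy (α + (1-2*α)*δ) := by
      rw [IY_eq α hα0 (by linarith) hα2.le (bscEnc δ) henc, Fintype.sum_bool,
        hmhalf true, hmhalf false]
      simp only [bscEnc]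
      norm_num
      rw [show α + (1-2*α)*(1-δ) = 1 - (α + (1-2*α)*δ) by ring, Real.binEntropy_one_sub]
      ring
    rw [hIYv, binEnt_eq, bconv_eq]

end IB
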